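/- arXiv:1110.1822 — 2 statements merged into one kernel-verified Lean document; each statement's English description precedes it below -/
import Mathlib

section
/- Let γ be the standard Gaussian measure on ℝ^d and let v : ℝ^d → ℝ be twice continuously differentiable such that g = e^{−v} is a probability density with respect to γ and g, |∇g| and ‖D²g‖ are bounded on ℝ^d. For t > 0 set g_t = T_t g and v_t = −log g_t. Then for every x ∈ ℝ^d and every h ∈ ℝ^d, ∂²_h v_t(x) ≤ e^{−2t} · T_t(e^{−v} ∂²_h v)(x) / T_t(e^{−v})(x), where ∂²_h denotes the second directional derivative in direction h. -/
open MeasureTheory Real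

noncomputable section

/-- The standard Gaussian measure on `ℝ^d`. -/
def stdGaussian (d : ℕ) : Measure (EuclideanSpace ℝ (Fin d)) :=
  volume.withDensity
    (fun x => ENNReal.ofReal ((2 * π) ^ (-(d : ℝ) / 2) * Real.exp (-‖x‖ ^ 2 / 2)))

/-- The Hessian matrix of `f` at `x`. -/
def hessianMat {d : ℕ} (f : EuclideanSpace ℝ (Fin d) → ℝ)
    (x : EuclideanSpace ℝ (Fin d)) : Matrix (Fin d) (Fin d) ℝ :=
  fun i j => gradient (fun y => gradient f y i) x j

/-- The derivative of the Hessian matrix in the `i`-th coordinate direction. -/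
def hessianDeriv {d : ℕ} (f : EuclideanSpace ℝ (Fin d) → ℝ) (i : Fin d)
    (x : EuclideanSpace ℝ (Fin d)) : Matrix (Fin d) (Fin d) ℝ :=
  fun j k => gradient (fun y => hessianMat f y j k) x i

/-- Squared Hilbert–Schmidt (Frobenius) norm of a matrix. -/
def hsNormSq {d : ℕ} (A : Matrix (Fin d) (Fin d) ℝ) : ℝ :=
  ∑ i, ∑ j, (A i j) ^ 2

/-- Operator norm of a matrix acting on Euclidean space. -/
def matOpNorm {d : ℕ} (A : Matrix (Fin d) (Fin d) ℝ) : ℝ :=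
  sSup {r | ∃ h : Fin d → ℝ, ∑ i, h i ^ 2 ≤ 1 ∧ r = Real.sqrt (∑ i, (A.mulVec h i) ^ 2)}

/-- `M(A) = sup {⟨Ah, h⟩ : |h| ≤ 1}`. -/
def quadSup {d : ℕ} (A : Matrix (Fin d) (Fin d) ℝ) : ℝ :=
  sSup {r | ∃ h : Fin d → ℝ, ∑ i, h i ^ 2 ≤ 1 ∧ r = dotProduct (A.mulVec h) h}

/-- Fredholm–Carleman determinant `det₂ A = det A · exp(tr(I - A))`. -/
def det2 {d : ℕ} (A : Matrix (Fin d) (Fin d) ℝ) : ℝ :=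
  A.det * Real.exp ((1 - A).trace)

/-- The Ornstein–Uhlenbeck semigroup (Bochner-integral form). -/
def ouSemigroup (d : ℕ) (t : ℝ) (f : EuclideanSpace ℝ (Fin d) → ℝ)
    (x : EuclideanSpace ℝ (Fin d)) : ℝ :=
  ∫ y, f (Real.exp (-t) • x + Real.sqrt (1 - Real.exp (-2 * t)) • y) ∂(stdGaussian d)

/-- Second directional derivative of `f` at `x` in direction `h`. -/
def dirDeriv2 {d : ℕ} (f : EuclideanSpace ℝ (Fin d) → ℝ)
    (x h : EuclideanSpace ℝ (Fin d)) : ℝ :=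
  deriv (deriv (fun s : ℝ => f (x + s • h))) 0


open RealInnerProductSpace Set

namespace OUAux

variable {E : Type*} [NormedAddCommGroup E] [NormedSpace ℝ E]

/-- Second derivative pairing. -/
def fd2 (f : E → ℝ) (z w : E) : ℝ := fderiv ℝ (fun u => fderiv ℝ f u w) z w

lemma line_hasDerivAt {f : E → ℝ} (hf : Differentiable ℝ f) (z w : E) (s : ℝ) :
    HasDerivAt (fun s : ℝ => f (z + s • w)) (fderiv ℝ f (z + s • w) w) s := by
  have h1 : HasDerivAt (fun s : ℝ => z + s • w) w s := by
    simpa using ((hasDerivAt_id s).smul_const w).const_add z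
  exact ((hf (z + s • w)).hasFDerivAt).comp_hasDerivAt s h1

lemma fderiv_apply_contDiff {f : E → ℝ} (hf : ContDiff ℝ 2 f) (w : E) :
    ContDiff ℝ 1 (fun z => fderiv ℝ f z w) := by
  have h1 : ContDiff ℝ 1 (fderiv ℝ f) :=
    (contDiff_succ_iff_fderiv.mp (by exact_mod_cast hf : ContDiff ℝ (1 + 1) f)).2.2
  exact (ContinuousLinearMap.apply ℝ ℝ w).contDiff.comp h1

lemma fderiv_apply_differentiable {f : E → ℝ} (hf : ContDiff ℝ 2 f) (w : E) :
    Differentiable ℝ (fun z => fderiv ℝ f z w) :=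
  (fderiv_apply_contDiff hf w).differentiable one_ne_zero

lemma fderiv_apply_continuous {f : E → ℝ} (hf : ContDiff ℝ 2 f) (w : E) :
    Continuous (fun z => fderiv ℝ f z w) :=
  (fderiv_apply_contDiff hf w).continuous

lemma fd2_continuous {f : E → ℝ} (hf : ContDiff ℝ 2 f) (w w' : E) :
    Continuous (fun z => fderiv ℝ (fun u => fderiv ℝ f u w) z w') := by
  have h1 : ContDiff ℝ 1 (fun z => fderiv ℝ f z w) := fderiv_apply_contDiff hf w
  have h2 : Continuous (fderiv ℝ (fun z => fderiv ℝ f z w)) := h1.continuous_fderiv one_ne_zero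
  exact ((ContinuousLinearMap.apply ℝ ℝ w').continuous).comp h2

lemma line2_hasDerivAt {f : E → ℝ} (hf : ContDiff ℝ 2 f) (z w : E) (s : ℝ) :
    HasDerivAt (fun s : ℝ => fderiv ℝ f (z + s • w) w) (fd2 f (z + s • w) w) s :=
  line_hasDerivAt (fderiv_apply_differentiable hf w) z w s

lemma fd2_smul {f : E → ℝ} (hf : ContDiff ℝ 2 f) (z w : E) (c : ℝ) :
    fd2 f z (c • w) = c ^ 2 * fd2 f z w := by
  have h1 : (fun u => fderiv ℝ f u (c • w)) = fun u => c * fderiv ℝ f u w := by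
    funext u; simp [_root_.map_smul]
  rw [fd2, h1]
  rw [fderiv_const_mul (fderiv_apply_differentiable hf w z)]
  simp [_root_.map_smul, fd2]
  ring

lemma onedim_sq_le {f f' f'' : ℝ → ℝ} {M : ℝ} (hM : 0 < M)
    (hf' : ∀ s, HasDerivAt f (f' s) s) (hf'' : ∀ s, HasDerivAt f' (f'' s) s)
    (hb : ∀ s, |f'' s| ≤ M) (hpos : ∀ s, 0 ≤ f s) : (f' 0) ^ 2 ≤ 2 * M * f 0 := by
  have hM0 : M ≠ 0 := ne_of_gt hM
  -- Lipschitz bound for f'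
  have hlip : ∀ a : ℝ, |f' a - f' 0| ≤ M * |a| := by
    intro a
    have := Convex.norm_image_sub_le_of_norm_hasDerivWithin_le
      (f := f') (f' := f'') (C := M) (s := (univ : Set ℝ))
      (fun x _ => (hf'' x).hasDerivWithinAt)
      (fun x _ => by simpa [Real.norm_eq_abs] using hb x) convex_univ (mem_univ 0) (mem_univ a)
    simpa [Real.norm_eq_abs] using this
  set q : ℝ → ℝ := fun s => f 0 + s * f' 0 + M * s ^ 2 / 2 - f s with hqdef
  have hq' : ∀ s, HasDerivAt q (f' 0 + M * s - f' s) s := by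
    intro s
    have h1 : HasDerivAt (fun s : ℝ => s * f' 0) (f' 0) s := by
      simpa using (hasDerivAt_id s).mul_const (f' 0)
    have h2 : HasDerivAt (fun s : ℝ => M * s ^ 2 / 2) (M * s) s := by
      refine (((hasDerivAt_pow 2 s).const_mul M).div_const 2).congr_deriv ?_
      have h22 : ((2:ℕ):ℝ) * s ^ (2 - 1) = 2 * s := by norm_num
      rw [h22]; ring
    have := (((hasDerivAt_const s (f 0)).add h1).add h2).sub (hf' s)
    exact this.congr_deriv (by ring)
  have hderivq : ∀ s, deriv q s = f' 0 + M * s - f' s := fun s => (hq' s).deriv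
  have hcont : Continuous q := by
    have : Differentiable ℝ q := fun s => (hq' s).differentiableAt
    exact this.continuous
  have hmono : MonotoneOn q (Ici (0 : ℝ)) := by
    apply monotoneOn_of_deriv_nonneg (convex_Ici 0) hcont.continuousOn
    · intro x hx
      exact (hq' x).differentiableAt.differentiableWithinAt
    · intro x hx
      rw [interior_Ici] at hx
      have hxpos : (0 : ℝ) < x := hx
      have := hlip x
      rw [abs_of_pos hxpos] at this
      have : f' x - f' 0 ≤ M * x := (abs_le.mp this).2
      rw [hderivq]; linarith
  have hanti : AntitoneOn q (Iic (0 : ℝ)) := by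
    apply antitoneOn_of_deriv_nonpos (convex_Iic 0) hcont.continuousOn
    · intro x hx
      exact (hq' x).differentiableAt.differentiableWithinAt
    · intro x hx
      rw [interior_Iic] at hx
      have hxneg : x < (0 : ℝ) := hx
      have h := hlip x
      rw [abs_of_neg hxneg] at h
      rw [hderivq]; linarith [(abs_le.mp h).1]
  have hq0 : q 0 = 0 := by simp [hqdef]
  set s₀ : ℝ := -(f' 0) / M with hs₀
  have hqs₀ : 0 ≤ q s₀ := by
    rcases le_or_gt 0 s₀ with h | h
    · have := hmono (self_mem_Ici) (mem_Ici.mpr h) h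
      rwa [hq0] at this
    · have := hanti (mem_Iic.mpr h.le) self_mem_Iic h.le
      rwa [hq0] at this
  have key : 0 ≤ f 0 + s₀ * f' 0 + M * s₀ ^ 2 / 2 := by
    have := hpos s₀
    simp only [hqdef] at hqs₀
    linarith
  rw [hs₀] at key
  have h1 : (-(f' 0) / M) * f' 0 = -(f' 0) ^ 2 / M := by ring
  have h2 : M * (-(f' 0) / M) ^ 2 / 2 = (f' 0) ^ 2 / (2 * M) := by
    field_simp
  rw [h1, h2] at key
  have := mul_nonneg key (le_of_lt hM)
  have hexp : (f 0 + -(f' 0) ^ 2 / M + f' 0 ^ 2 / (2 * M)) * M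
      = f 0 * M - (f' 0) ^ 2 / 2 := by
    field_simp; ring
  rw [hexp] at this
  nlinarith [this, hM]


variable {d : ℕ}
local notation "E" => EuclideanSpace ℝ (Fin d)

lemma euclid_decomp (w : E) : w = ∑ j, w j • EuclideanSpace.single j (1 : ℝ) := by
  have := (EuclideanSpace.basisFun (Fin d) ℝ).sum_repr' w
  simp only [EuclideanSpace.basisFun_apply] at this
  conv_lhs => rw [← this]
  refine Finset.sum_congr rfl fun j _ => ?_
  rw [EuclideanSpace.inner_single_left]
  simp

lemma clm_expand (ℓ : E →L[ℝ] ℝ) (w : E) :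
    ℓ w = ∑ j, w j * ℓ (EuclideanSpace.single j (1 : ℝ)) := by
  conv_lhs => rw [euclid_decomp w]
  rw [map_sum]
  simp [smul_eq_mul]

lemma gradient_apply (f : E → ℝ) (y : E) (i : Fin d) :
    gradient f y i = fderiv ℝ f y (EuclideanSpace.single i (1 : ℝ)) := by
  have : fderiv ℝ f y (EuclideanSpace.single i (1:ℝ))
      = ⟪gradient f y, EuclideanSpace.single i (1:ℝ)⟫ := by
    rw [gradient]
    rw [InnerProductSpace.toDual_symm_apply]
  rw [this, EuclideanSpace.inner_single_right]
  simp

lemma inner_grad (f : E → ℝ) (y w : E) :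
    fderiv ℝ f y w = ⟪gradient f y, w⟫ := by
  rw [gradient, InnerProductSpace.toDual_symm_apply]

lemma hessianMat_eq (f : E → ℝ) (z : E) (i j : Fin d) :
    hessianMat f z i j = fderiv ℝ (fun y => fderiv ℝ f y (EuclideanSpace.single i (1:ℝ))) z
      (EuclideanSpace.single j (1 : ℝ)) := by
  simp only [hessianMat, gradient_apply]

lemma matOpNorm_bddAbove (A : Matrix (Fin d) (Fin d) ℝ) :
    BddAbove {r | ∃ h : Fin d → ℝ, ∑ i, h i ^ 2 ≤ 1 ∧ r = Real.sqrt (∑ i, (A.mulVec h i) ^ 2)} := by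
  refine ⟨Real.sqrt (∑ i, ∑ j, (A i j) ^ 2), ?_⟩
  rintro r ⟨h, hh, rfl⟩
  apply Real.sqrt_le_sqrt
  apply Finset.sum_le_sum
  intro i _
  have hcs := Finset.sum_mul_sq_le_sq_mul_sq Finset.univ (fun j => A i j) h
  have : (A.mulVec h i) ^ 2 ≤ (∑ j, A i j ^ 2) * ∑ j, h j ^ 2 := by
    simpa [Matrix.mulVec, dotProduct] using hcs
  calc (A.mulVec h i) ^ 2 ≤ (∑ j, A i j ^ 2) * ∑ j, h j ^ 2 := this
    _ ≤ (∑ j, A i j ^ 2) * 1 := by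
        apply mul_le_mul_of_nonneg_left hh
        positivity
    _ = ∑ j, A i j ^ 2 := mul_one _

lemma matOpNorm_nonneg (A : Matrix (Fin d) (Fin d) ℝ) : 0 ≤ matOpNorm A := by
  apply le_csSup (matOpNorm_bddAbove A)
  exact ⟨0, by simp, by simp [Matrix.mulVec]⟩

lemma sqrt_sum_le_matOpNorm (A : Matrix (Fin d) (Fin d) ℝ) (u : Fin d → ℝ)
    (hu : ∑ i, u i ^ 2 ≤ 1) :
    Real.sqrt (∑ i, (A.mulVec u i) ^ 2) ≤ matOpNorm A :=
  le_csSup (matOpNorm_bddAbove A) ⟨u, hu, rfl⟩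




lemma fd2_expand {d : ℕ} {f : EuclideanSpace ℝ (Fin d) → ℝ} (hf : ContDiff ℝ 2 f)
    (z w : EuclideanSpace ℝ (Fin d)) :
    fd2 f z w = ∑ j, w j * ∑ k, w k * hessianMat f z j k := by
  classical
  set e : Fin d → EuclideanSpace ℝ (Fin d) := fun j => EuclideanSpace.single j (1 : ℝ) with he
  have h1 : (fun u => fderiv ℝ f u w) = fun u => ∑ j, w j * fderiv ℝ f u (e j) := by
    funext u
    exact clm_expand (fderiv ℝ f u) w
  have hdiff : ∀ j : Fin d, DifferentiableAt ℝ (fun u => fderiv ℝ f u (e j)) z :=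
    fun j => fderiv_apply_differentiable hf (e j) z
  rw [fd2, h1]
  rw [fderiv_fun_sum (fun j _ => (hdiff j).const_mul (w j))]
  rw [ContinuousLinearMap.sum_apply]
  refine Finset.sum_congr rfl fun j _ => ?_
  rw [fderiv_const_mul (hdiff j) (w j)]
  rw [ContinuousLinearMap.smul_apply, smul_eq_mul]
  congr 1
  rw [clm_expand (fderiv ℝ (fun u => fderiv ℝ f u (e j)) z) w]
  refine Finset.sum_congr rfl fun k _ => ?_
  rw [hessianMat_eq]

lemma abs_fd2_le {d : ℕ} {f : EuclideanSpace ℝ (Fin d) → ℝ} (hf : ContDiff ℝ 2 f)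
    (z w : EuclideanSpace ℝ (Fin d)) :
    |fd2 f z w| ≤ matOpNorm (hessianMat f z) * ‖w‖ ^ 2 := by
  classical
  set A := hessianMat f z with hA
  set uw : Fin d → ℝ := fun i => w i with huw
  have hsum : fd2 f z w = dotProduct (A.mulVec uw) uw := by
    rw [fd2_expand hf]
    rw [dotProduct]
    refine Finset.sum_congr rfl fun j _ => ?_
    rw [Matrix.mulVec, dotProduct, Finset.sum_mul, Finset.mul_sum]
    exact Finset.sum_congr rfl fun k _ => by ring
  have hS : (∑ i, uw i ^ 2) = ‖w‖ ^ 2 := by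
    rw [EuclideanSpace.norm_eq, Real.sq_sqrt (by positivity)]
    exact Finset.sum_congr rfl fun i _ => by rw [Real.norm_eq_abs, sq_abs]
  have hcs : |fd2 f z w| ≤ Real.sqrt (∑ i, (A.mulVec uw i) ^ 2) * Real.sqrt (∑ i, uw i ^ 2) := by
    rw [hsum]
    have h1 := Finset.sum_mul_sq_le_sq_mul_sq Finset.univ (fun i => A.mulVec uw i) uw
    have h2 : |dotProduct (A.mulVec uw) uw|
        = Real.sqrt ((dotProduct (A.mulVec uw) uw) ^ 2) := by
      rw [Real.sqrt_sq_eq_abs]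
    rw [h2, ← Real.sqrt_mul (by positivity)]
    apply Real.sqrt_le_sqrt
    simpa [dotProduct] using h1
  have hkey : Real.sqrt (∑ i, (A.mulVec uw i) ^ 2) ≤ matOpNorm A * ‖w‖ := by
    by_cases hw : ‖w‖ = 0
    · have hw0 : w = 0 := by simpa using hw
      have : uw = 0 := by funext i; simp [huw, hw0]
      rw [this]
      simp [Matrix.mulVec_zero, hw]
    · have hwpos : 0 < ‖w‖ := lt_of_le_of_ne (norm_nonneg w) (Ne.symm hw)
      set r := ‖w‖ with hr
      set u : Fin d → ℝ := fun i => r⁻¹ * uw i with hu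
      have huw_eq : uw = r • u := by
        funext i; simp [hu]; field_simp
      have hu1 : (∑ i, u i ^ 2) ≤ 1 := by
        have : (∑ i, u i ^ 2) = r⁻¹ ^ 2 * ∑ i, uw i ^ 2 := by
          rw [Finset.mul_sum]; exact Finset.sum_congr rfl fun i _ => by rw [hu]; ring
        rw [this, hS]
        have hr2 : r ^ 2 ≠ 0 := pow_ne_zero 2 hw
        field_simp
        exact le_rfl
      have hmv : A.mulVec uw = r • A.mulVec u := by
        rw [huw_eq, Matrix.mulVec_smul]
      rw [hmv]
      have : (∑ i, ((r • A.mulVec u) i) ^ 2) = r ^ 2 * ∑ i, (A.mulVec u i) ^ 2 := by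
        rw [Finset.mul_sum]; exact Finset.sum_congr rfl fun i _ => by
          simp [Pi.smul_apply, smul_eq_mul]; ring
      rw [this, Real.sqrt_mul (by positivity), Real.sqrt_sq hwpos.le]
      rw [mul_comm (matOpNorm A) r]
      exact mul_le_mul_of_nonneg_left (sqrt_sum_le_matOpNorm A u hu1) hwpos.le
  calc |fd2 f z w| ≤ Real.sqrt (∑ i, (A.mulVec uw i) ^ 2) * Real.sqrt (∑ i, uw i ^ 2) := hcs
    _ ≤ (matOpNorm A * ‖w‖) * ‖w‖ := by
        apply mul_le_mul hkey _ (Real.sqrt_nonneg _) (mul_nonneg (matOpNorm_nonneg A) (norm_nonneg w))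
        rw [hS, Real.sqrt_sq (norm_nonneg w)]
    _ = matOpNorm A * ‖w‖ ^ 2 := by ring

section Gauss

open ENNReal

lemma gauss_density_integrable (d : ℕ) :
    Integrable (fun x : EuclideanSpace ℝ (Fin d) =>
      (2 * π) ^ (-(d : ℝ) / 2) * Real.exp (-‖x‖ ^ 2 / 2)) volume := by
  have h := (GaussianFourier.integrable_cexp_neg_mul_sq_norm_add_of_euclideanSpace (ι := Fin d)
    (b := (1/2 : ℂ)) (by norm_num) 0 0).norm
  have h2 : Integrable (fun x : EuclideanSpace ℝ (Fin d) => Real.exp (-‖x‖ ^ 2 / 2)) volume := by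
    refine h.congr (Filter.Eventually.of_forall fun x => ?_)
    show ‖Complex.exp (-(1/2) * (‖x‖:ℂ) ^ 2 + 0 * (inner ℝ (0 : EuclideanSpace ℝ (Fin d)) x : ℝ))‖
        = rexp (-‖x‖ ^ 2 / 2)
    rw [Complex.norm_exp]
    congr 1
    simp [Complex.add_re, Complex.mul_re, ← Complex.ofReal_pow]
    ring
  exact h2.const_mul _

instance stdGaussian_finite (d : ℕ) : IsFiniteMeasure (stdGaussian d) := by
  constructor
  rw [stdGaussian, withDensity_apply _ MeasurableSet.univ, setLIntegral_univ]
  rw [← ofReal_integral_eq_lintegral_ofReal (gauss_density_integrable d)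
    (Filter.Eventually.of_forall fun x => by positivity)]
  exact ENNReal.ofReal_lt_top

lemma stdGaussian_univ_pos (d : ℕ) : 0 < stdGaussian d Set.univ := by
  rw [stdGaussian, withDensity_apply _ MeasurableSet.univ, setLIntegral_univ]
  have hmeas : Measurable (fun x : EuclideanSpace ℝ (Fin d) =>
      ENNReal.ofReal ((2 * π) ^ (-(d : ℝ) / 2) * Real.exp (-‖x‖ ^ 2 / 2))) := by
    apply Measurable.ennreal_ofReal
    exact (continuous_const.mul (((continuous_norm.pow 2).neg.div_const 2).rexp)).measurable
  rw [lintegral_pos_iff_support hmeas]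
  have : Function.support (fun x : EuclideanSpace ℝ (Fin d) =>
      ENNReal.ofReal ((2 * π) ^ (-(d : ℝ) / 2) * Real.exp (-‖x‖ ^ 2 / 2))) = Set.univ := by
    ext x
    simp only [Function.mem_support, Set.mem_univ, iff_true]
    intro hcon
    have h1 : (0:ℝ) < (2 * π) ^ (-(d : ℝ) / 2) * Real.exp (-‖x‖ ^ 2 / 2) := by positivity
    rw [ENNReal.ofReal_eq_zero] at hcon
    linarith
  rw [this]
  exact isOpen_univ.measure_pos volume ⟨0, trivial⟩

lemma integrable_of_bdd {d : ℕ} {f : EuclideanSpace ℝ (Fin d) → ℝ} (hf : Continuous f)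
    {C : ℝ} (hC : ∀ u, |f u| ≤ C) : Integrable f (stdGaussian d) := by
  refine (integrable_const C).mono' hf.aestronglyMeasurable ?_
  exact Filter.Eventually.of_forall fun u => by simpa using hC u

lemma integral_pos_of_pos {d : ℕ} {f : EuclideanSpace ℝ (Fin d) → ℝ}
    (hf : Integrable f (stdGaussian d)) (hpos : ∀ u, 0 < f u) :
    0 < ∫ u, f u ∂(stdGaussian d) := by
  rw [integral_pos_iff_support_of_nonneg (fun u => (hpos u).le) hf]
  have : Function.support f = Set.univ := by
    ext u; simp [Function.mem_support, ne_of_gt (hpos u)]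
  rw [this]
  exact stdGaussian_univ_pos d

end Gauss

section Helpers

lemma hasDerivAt_integral_param {d : ℕ} (F F' : ℝ → EuclideanSpace ℝ (Fin d) → ℝ) {C : ℝ} (s₀ : ℝ)
    (hmeas : ∀ s, MeasureTheory.AEStronglyMeasurable (F s) (stdGaussian d))
    (hint : Integrable (F s₀) (stdGaussian d))
    (hmeas' : MeasureTheory.AEStronglyMeasurable (F' s₀) (stdGaussian d))
    (hbound : ∀ y s, |F' s y| ≤ C)
    (hderiv : ∀ y s, HasDerivAt (fun u => F u y) (F' s y) s) :
    HasDerivAt (fun s => ∫ y, F s y ∂(stdGaussian d)) (∫ y, F' s₀ y ∂(stdGaussian d)) s₀ := by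
  have key := hasDerivAt_integral_of_dominated_loc_of_deriv_le (μ := stdGaussian d)
    (F := F) (F' := F') (x₀ := s₀) (bound := fun _ => C) Filter.univ_mem
    (Filter.Eventually.of_forall hmeas) hint hmeas'
    (Filter.Eventually.of_forall fun y s _ => by
      simpa [Real.norm_eq_abs] using hbound y s)
    (integrable_const C)
    (Filter.Eventually.of_forall fun y s _ => hderiv y s)
  exact key.2

variable {E' : Type*} [NormedAddCommGroup E'] [NormedSpace ℝ E']

lemma contDiff_expNeg {v : E' → ℝ} (hv : ContDiff ℝ 2 v) :
    ContDiff ℝ 2 (fun y => Real.exp (-v y)) :=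
  (Real.contDiff_exp.of_le le_top).comp hv.neg

lemma hasFDerivAt_expNeg {v : E' → ℝ} (hv : ContDiff ℝ 2 v) (z : E') :
    HasFDerivAt (fun y => Real.exp (-v y))
      (Real.exp (-v z) • (-(fderiv ℝ v z))) z := by
  have h := ((hv.differentiable two_ne_zero z).hasFDerivAt).neg
  exact h.exp

lemma fderiv_expNeg {v : E' → ℝ} (hv : ContDiff ℝ 2 v) (z w : E') :
    fderiv ℝ (fun y => Real.exp (-v y)) z w
      = -(Real.exp (-v z) * fderiv ℝ v z w) := by
  rw [(hasFDerivAt_expNeg hv z).fderiv]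
  simp [smul_eq_mul]

lemma fd2_expNeg {v : E' → ℝ} (hv : ContDiff ℝ 2 v) (z w : E') :
    fd2 (fun y => Real.exp (-v y)) z w
      = Real.exp (-v z) * ((fderiv ℝ v z w) ^ 2 - fd2 v z w) := by
  have hstep : (fun u => fderiv ℝ (fun y => Real.exp (-v y)) u w)
      = fun u => -(Real.exp (-v u) * fderiv ℝ v u w) :=
    funext fun u => fderiv_expNeg hv u w
  rw [fd2, hstep]
  have hG : HasFDerivAt (fun u => Real.exp (-v u))
      (Real.exp (-v z) • (-(fderiv ℝ v z))) z := hasFDerivAt_expNeg hv z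
  have hP : HasFDerivAt (fun u => fderiv ℝ v u w)
      (fderiv ℝ (fun u => fderiv ℝ v u w) z) z :=
    (fderiv_apply_differentiable hv w z).hasFDerivAt
  have hprod := (hG.mul hP).neg
  rw [HasFDerivAt.fderiv (f := fun u => -(Real.exp (-v u) * fderiv ℝ v u w)) hprod]
  simp only [ContinuousLinearMap.neg_apply, ContinuousLinearMap.add_apply,
    ContinuousLinearMap.smul_apply, smul_eq_mul, ContinuousLinearMap.neg_apply]
  rw [fd2]
  ring

lemma dirDeriv2_eq_fd2 {d : ℕ} {f : EuclideanSpace ℝ (Fin d) → ℝ} (hf : ContDiff ℝ 2 f)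
    (x h : EuclideanSpace ℝ (Fin d)) :
    dirDeriv2 f x h = fd2 f x h := by
  rw [dirDeriv2]
  have h1 : deriv (fun s : ℝ => f (x + s • h)) = fun s => fderiv ℝ f (x + s • h) h :=
    funext fun s => (line_hasDerivAt (hf.differentiable two_ne_zero) x h s).deriv
  rw [h1]
  have h2 := (line2_hasDerivAt hf x h 0).deriv
  simpa using h2

end Helpers

end OUAux

/-- pointwise bound for second directional derivatives of
`v_t = -log T_t(e^{-v})` along the Ornstein–Uhlenbeck semigroup. -/
theorem ou_second_directional_derivative_bound (d : ℕ)
    (v : EuclideanSpace ℝ (Fin d) → ℝ)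
    (hv_smooth : ContDiff ℝ 2 v)
    (hg_prob : ∫ x, Real.exp (-v x) ∂(stdGaussian d) = 1)
    (hg_bdd : ∃ C : ℝ, ∀ x, Real.exp (-v x) ≤ C)
    (hg'_bdd : ∃ C : ℝ, ∀ x, ‖gradient (fun y => Real.exp (-v y)) x‖ ≤ C)
    (hg''_bdd : ∃ C : ℝ, ∀ x, matOpNorm (hessianMat (fun y => Real.exp (-v y)) x) ≤ C)
    (t : ℝ) (ht : 0 < t) (x h : EuclideanSpace ℝ (Fin d)) :
    dirDeriv2 (fun y => -Real.log (ouSemigroup d t (fun z => Real.exp (-v z)) y)) x h ≤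
      Real.exp (-2 * t) *
        ouSemigroup d t (fun y => Real.exp (-v y) * dirDeriv2 v y h) x /
          ouSemigroup d t (fun y => Real.exp (-v y)) x := by
  classical
  obtain ⟨C₀, hC₀⟩ := hg_bdd
  obtain ⟨C₁, hC₁⟩ := hg'_bdd
  obtain ⟨C₂, hC₂⟩ := hg''_bdd
  set g : EuclideanSpace ℝ (Fin d) → ℝ := fun z => Real.exp (-v z) with hgdef
  have hg2 : ContDiff ℝ 2 g := OUAux.contDiff_expNeg hv_smooth
  have hgpos : ∀ u, 0 < g u := fun u => Real.exp_pos _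
  have hgb : ∀ u, |g u| ≤ C₀ := fun u => by
    rw [abs_of_pos (hgpos u)]; exact hC₀ u
  -- pointwise derivative identities
  have hD1g : ∀ u w', fderiv ℝ g u w' = -(g u * fderiv ℝ v u w') :=
    fun u w' => OUAux.fderiv_expNeg hv_smooth u w'
  have hD2g : ∀ u w', OUAux.fd2 g u w' = g u * ((fderiv ℝ v u w') ^ 2 - OUAux.fd2 v u w') :=
    fun u w' => OUAux.fd2_expNeg hv_smooth u w'
  -- bounds
  have hb1 : ∀ u w', |fderiv ℝ g u w'| ≤ C₁ * ‖w'‖ := by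
    intro u w'
    rw [OUAux.inner_grad]
    calc |⟪gradient g u, w'⟫| ≤ ‖gradient g u‖ * ‖w'‖ := abs_real_inner_le_norm _ _
      _ ≤ C₁ * ‖w'‖ := mul_le_mul_of_nonneg_right (hC₁ u) (norm_nonneg _)
  have hb2 : ∀ u w', |OUAux.fd2 g u w'| ≤ C₂ * ‖w'‖ ^ 2 := fun u w' =>
    (OUAux.abs_fd2_le hg2 u w').trans
      (mul_le_mul_of_nonneg_right (hC₂ u) (by positivity))
  set M : ℝ := C₂ * ‖h‖ ^ 2 + 1 with hMdef
  have hMpos : 0 < M := by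
    have h0 : 0 ≤ C₂ * ‖h‖ ^ 2 := le_trans (abs_nonneg _) (hb2 x h)
    rw [hMdef]; linarith
  have hgp2 : ∀ u, (fderiv ℝ g u h) ^ 2 ≤ 2 * M * g u := by
    intro u
    have key := OUAux.onedim_sq_le (f := fun s : ℝ => g (u + s • h))
      (f' := fun s : ℝ => fderiv ℝ g (u + s • h) h)
      (f'' := fun s : ℝ => OUAux.fd2 g (u + s • h) h) hMpos
      (fun s => OUAux.line_hasDerivAt (hg2.differentiable two_ne_zero) u h s)
      (fun s => OUAux.line2_hasDerivAt hg2 u h s)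
      (fun s => (hb2 _ h).trans (by rw [hMdef]; linarith))
      (fun s => (hgpos _).le)
    simpa using key
  have hgq2 : ∀ u, g u * (fderiv ℝ v u h) ^ 2 ≤ 2 * M := by
    intro u
    have h1 := hgp2 u
    rw [hD1g u h, neg_sq] at h1
    have h3 : (g u * (fderiv ℝ v u h) ^ 2) * g u ≤ (2 * M) * g u := by nlinarith [h1]
    exact le_of_mul_le_mul_right h3 (hgpos u)
  -- continuity facts
  have hcg : Continuous g := hg2.continuous
  have hcp : Continuous (fun u => fderiv ℝ v u h) := OUAux.fderiv_apply_continuous hv_smooth h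
  have hcq : Continuous (fun u => OUAux.fd2 v u h) := OUAux.fd2_continuous hv_smooth h h
  have hcgw : ∀ w' : EuclideanSpace ℝ (Fin d), Continuous (fun u => fderiv ℝ g u w') :=
    fun w' => OUAux.fderiv_apply_continuous hg2 w'
  have hcg2w : ∀ w' : EuclideanSpace ℝ (Fin d), Continuous (fun u => OUAux.fd2 g u w') :=
    fun w' => OUAux.fd2_continuous hg2 w' w'
  -- geometric setup
  set et : ℝ := Real.exp (-t) with het
  set σ : ℝ := Real.sqrt (1 - Real.exp (-2 * t)) with hσ
  set w : EuclideanSpace ℝ (Fin d) := et • h with hwdef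
  set z : EuclideanSpace ℝ (Fin d) → EuclideanSpace ℝ (Fin d) :=
    fun y => et • x + σ • y with hzdef
  have hzc : Continuous z := by
    rw [hzdef]; exact continuous_const.add (continuous_id.const_smul σ)
  have hline : ∀ s : ℝ, Continuous (fun y => z y + s • w) :=
    fun s => hzc.add continuous_const
  have hpt : ∀ (s : ℝ) (y : EuclideanSpace ℝ (Fin d)),
      et • (x + s • h) + σ • y = z y + s • w := by
    intro s y
    rw [hzdef, hwdef]
    simp only [smul_add, smul_smul]
    rw [mul_comm et s, ← smul_smul]
    abel
  -- integral functions
  set Φ : ℝ → ℝ := fun s => ∫ y, g (z y + s • w) ∂(stdGaussian d) with hΦdef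
  set Ψ : ℝ → ℝ := fun s => ∫ y, fderiv ℝ g (z y + s • w) w ∂(stdGaussian d) with hΨdef
  set X : ℝ → ℝ := fun s => ∫ y, OUAux.fd2 g (z y + s • w) w ∂(stdGaussian d) with hXdef
  -- integrability
  have hIg : ∀ s : ℝ, Integrable (fun y => g (z y + s • w)) (stdGaussian d) :=
    fun s => OUAux.integrable_of_bdd (hcg.comp (hline s)) (fun u => hgb _)
  have hΦ' : ∀ s, HasDerivAt Φ (Ψ s) s := by
    intro s₀
    apply OUAux.hasDerivAt_integral_param
      (fun s y => g (z y + s • w)) (fun s y => fderiv ℝ g (z y + s • w) w) s₀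
      (fun s => (hcg.comp (hline s)).aestronglyMeasurable)
      (hIg s₀)
      (((hcgw w).comp (hline s₀)).aestronglyMeasurable)
      (fun y s => hb1 _ w)
      (fun y s => OUAux.line_hasDerivAt (hg2.differentiable two_ne_zero) (z y) w s)
  have hΨ' : ∀ s, HasDerivAt Ψ (X s) s := by
    intro s₀
    apply OUAux.hasDerivAt_integral_param
      (fun s y => fderiv ℝ g (z y + s • w) w) (fun s y => OUAux.fd2 g (z y + s • w) w) s₀
      (fun s => ((hcgw w).comp (hline s)).aestronglyMeasurable)
      (OUAux.integrable_of_bdd ((hcgw w).comp (hline s₀)) (fun u => hb1 _ w))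
      (((hcg2w w).comp (hline s₀)).aestronglyMeasurable)
      (fun y s => hb2 _ w)
      (fun y s => OUAux.line2_hasDerivAt hg2 (z y) w s)
  have hΦpos : ∀ s, 0 < Φ s := fun s =>
    OUAux.integral_pos_of_pos (hIg s) (fun y => hgpos _)
  -- translation to the OU semigroup
  have hπ : ∀ s : ℝ, ouSemigroup d t g (x + s • h) = Φ s := by
    intro s
    rw [ouSemigroup, hΦdef]
    refine integral_congr_ae (Filter.Eventually.of_forall fun y => ?_)
    show g (et • (x + s • h) + σ • y) = g (z y + s • w)
    rw [hpt s y]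
  -- the four key integrals
  set I₀ : ℝ := ∫ y, g (z y) ∂(stdGaussian d) with hI₀def
  set J₁ : ℝ := ∫ y, g (z y) * fderiv ℝ v (z y) h ∂(stdGaussian d) with hJ₁def
  set J₂ : ℝ := ∫ y, g (z y) * OUAux.fd2 v (z y) h ∂(stdGaussian d) with hJ₂def
  set K : ℝ := ∫ y, g (z y) * (fderiv ℝ v (z y) h) ^ 2 ∂(stdGaussian d) with hKdef
  have hIg0 : Integrable (fun y => g (z y)) (stdGaussian d) :=
    OUAux.integrable_of_bdd (hcg.comp hzc) (fun u => hgb _)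
  have hIJ₁ : Integrable (fun y => g (z y) * fderiv ℝ v (z y) h) (stdGaussian d) := by
    apply OUAux.integrable_of_bdd ((hcg.comp hzc).mul (hcp.comp hzc)) (C := C₁ * ‖h‖)
    intro y
    show |g (z y) * fderiv ℝ v (z y) h| ≤ C₁ * ‖h‖
    have := hb1 (z y) h
    rw [hD1g (z y) h, abs_neg] at this
    exact this
  have hIK : Integrable (fun y => g (z y) * (fderiv ℝ v (z y) h) ^ 2) (stdGaussian d) := by
    apply OUAux.integrable_of_bdd ((hcg.comp hzc).mul ((hcp.comp hzc).pow 2)) (C := 2 * M)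
    intro y
    show |g (z y) * (fderiv ℝ v (z y) h) ^ 2| ≤ 2 * M
    rw [abs_of_nonneg (mul_nonneg (hgpos _).le (sq_nonneg _))]
    exact hgq2 (z y)
  have hIJ₂ : Integrable (fun y => g (z y) * OUAux.fd2 v (z y) h) (stdGaussian d) := by
    apply OUAux.integrable_of_bdd ((hcg.comp hzc).mul (hcq.comp hzc)) (C := 2 * M + C₂ * ‖h‖ ^ 2)
    intro y
    show |g (z y) * OUAux.fd2 v (z y) h| ≤ 2 * M + C₂ * ‖h‖ ^ 2
    have hid : g (z y) * OUAux.fd2 v (z y) h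
        = g (z y) * (fderiv ℝ v (z y) h) ^ 2 - OUAux.fd2 g (z y) h := by
      rw [hD2g (z y) h]; ring
    rw [hid]
    calc |g (z y) * (fderiv ℝ v (z y) h) ^ 2 - OUAux.fd2 g (z y) h|
        ≤ |g (z y) * (fderiv ℝ v (z y) h) ^ 2| + |OUAux.fd2 g (z y) h| := abs_sub _ _
      _ ≤ 2 * M + C₂ * ‖h‖ ^ 2 := by
          apply add_le_add _ (hb2 (z y) h)
          rw [abs_of_nonneg (mul_nonneg (hgpos _).le (sq_nonneg _))]
          exact hgq2 (z y)
  -- values at 0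
  have hΦ0 : Φ 0 = I₀ := by
    rw [hΦdef, hI₀def]
    simp
  have hΨ0 : Ψ 0 = (-et) * J₁ := by
    rw [hΨdef]
    show (∫ y, fderiv ℝ g (z y + (0:ℝ) • w) w ∂(stdGaussian d)) = (-et) * J₁
    have : (fun y => fderiv ℝ g (z y + (0:ℝ) • w) w)
        = fun y => (-et) * (g (z y) * fderiv ℝ v (z y) h) := by
      funext y
      rw [zero_smul, add_zero, hwdef]
      rw [_root_.map_smul (fderiv ℝ g (z y)) et h]
      rw [smul_eq_mul, hD1g (z y) h]
      ring
    rw [this, integral_const_mul, hJ₁def]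
  have hX0 : X 0 = et ^ 2 * (K - J₂) := by
    rw [hXdef]
    show (∫ y, OUAux.fd2 g (z y + (0:ℝ) • w) w ∂(stdGaussian d)) = et ^ 2 * (K - J₂)
    have : (fun y => OUAux.fd2 g (z y + (0:ℝ) • w) w)
        = fun y => et ^ 2 * (g (z y) * (fderiv ℝ v (z y) h) ^ 2
            - g (z y) * OUAux.fd2 v (z y) h) := by
      funext y
      rw [zero_smul, add_zero, hwdef, OUAux.fd2_smul hg2 (z y) h et]
      rw [hD2g (z y) h]
      ring
    rw [this, integral_const_mul, integral_sub hIK hIJ₂, hKdef, hJ₂def]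
  -- LHS computation
  have hLHS : dirDeriv2 (fun y => -Real.log (ouSemigroup d t g y)) x h
      = -((X 0 * Φ 0 - Ψ 0 * Ψ 0) / (Φ 0) ^ 2) := by
    rw [dirDeriv2]
    have hfun : (fun s : ℝ => (fun y => -Real.log (ouSemigroup d t g y)) (x + s • h))
        = fun s => -Real.log (Φ s) := funext fun s => by rw [← hπ s]
    rw [hfun]
    have hD : deriv (fun s => -Real.log (Φ s)) = fun s => -(Ψ s / Φ s) :=
      funext fun s => (((hΦ' s).log (ne_of_gt (hΦpos s))).neg).deriv
    rw [hD]
    exact (((hΨ' 0).div (hΦ' 0) (ne_of_gt (hΦpos 0))).neg).deriv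
  -- RHS identities
  have hRHS1 : ouSemigroup d t (fun y => Real.exp (-v y) * dirDeriv2 v y h) x = J₂ := by
    rw [ouSemigroup, hJ₂def]
    refine integral_congr_ae (Filter.Eventually.of_forall fun y => ?_)
    have hpt0 : Real.exp (-t) • x + Real.sqrt (1 - Real.exp (-2 * t)) • y = z y := rfl
    simp only [hpt0]
    rw [OUAux.dirDeriv2_eq_fd2 hv_smooth]
  have hRHS0 : ouSemigroup d t g x = I₀ := by
    rw [ouSemigroup, hI₀def]
  have het2 : Real.exp (-2 * t) = et ^ 2 := by
    rw [het, sq, ← Real.exp_add]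
    ring_nf
  have hI₀pos : 0 < I₀ := by rw [← hΦ0]; exact hΦpos 0
  -- Cauchy–Schwarz
  have hCS : J₁ ^ 2 ≤ K * I₀ := by
    set c : ℝ := J₁ / I₀ with hcdef
    have hnn : 0 ≤ ∫ y, g (z y) * (fderiv ℝ v (z y) h - c) ^ 2 ∂(stdGaussian d) :=
      integral_nonneg fun y => by positivity
    have hexpand : (fun y => g (z y) * (fderiv ℝ v (z y) h - c) ^ 2)
        = fun y => (g (z y) * (fderiv ℝ v (z y) h) ^ 2
            - (2 * c) * (g (z y) * fderiv ℝ v (z y) h)) + c ^ 2 * g (z y) :=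
      funext fun y => by ring
    rw [hexpand] at hnn
    have hInt1 : Integrable (fun y => g (z y) * (fderiv ℝ v (z y) h) ^ 2
        - 2 * c * (g (z y) * fderiv ℝ v (z y) h)) (stdGaussian d) :=
      hIK.sub (hIJ₁.const_mul _)
    have hInt2 : Integrable (fun y => c ^ 2 * g (z y)) (stdGaussian d) := hIg0.const_mul _
    rw [integral_add hInt1 hInt2] at hnn
    rw [integral_sub hIK (hIJ₁.const_mul (2 * c))] at hnn
    rw [integral_const_mul, integral_const_mul] at hnn
    have hcI : c * I₀ = J₁ := div_mul_cancel₀ _ (ne_of_gt hI₀pos)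
    clear_value c
    have h5 : (K - 2 * c * J₁ + c ^ 2 * I₀) * I₀ = K * I₀ - J₁ ^ 2 := by
      have hJc : J₁ = c * I₀ := hcI.symm
      rw [hJc]; ring
    have h6 : 0 ≤ K * I₀ - J₁ ^ 2 := by
      rw [← h5]; exact mul_nonneg hnn hI₀pos.le
    linarith
  -- final assembly
  rw [hLHS, hRHS1, hRHS0, het2, hΦ0, hΨ0, hX0]
  clear_value Φ Ψ X K J₂ J₁ I₀ z w σ et M g
  rw [← neg_div, div_le_div_iff₀ (pow_pos hI₀pos 2) hI₀pos]
  have hkey : 0 ≤ et ^ 2 * I₀ * (K * I₀ - J₁ ^ 2) :=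
    mul_nonneg (mul_nonneg (sq_nonneg et) hI₀pos.le) (sub_nonneg.mpr hCS)
  nlinarith [hkey]

end
end

section
/- Let (X, 𝒜, μ) be a finite measure space, let M < ∞, and let (f_n) and (h_n) be sequences of measurable real-valued functions on X such that h_n ≥ 0 for all n, the sequence (h_n) is uniformly integrable with respect to μ (i.e. sup_n ∫ h_n dμ < ∞ and for every ε > 0 there is δ > 0 such that μ(E) < δ implies ∫_E h_n dμ < ε for all n), and ∫ f_n²/(1 + h_n) dμ ≤ M for all n. Then the sequence (f_n) is uniformly integrable with respect to μ: sup_n ∫ |f_n| dμ < ∞ and for every ε > 0 there is δ > 0 such that μ(E) < δ implies ∫_E |f_n| dμ ≤ ε for all n. -/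
open MeasureTheory

lemma amgm_aux (t fx b : ℝ) (ht : 0 < t) (hb : 0 < b) :
    |fx| ≤ (t * (fx ^ 2 / b) + b / t) / 2 := by
  have h1 : |fx| * (2 * b * t) ≤ t ^ 2 * fx ^ 2 + b ^ 2 := by
    nlinarith [sq_nonneg (t * |fx| - b), sq_abs fx]
  have h2 : (t * (fx ^ 2 / b) + b / t) / 2 = (t ^ 2 * fx ^ 2 + b ^ 2) / (2 * b * t) := by
    field_simp
  rw [h2, le_div_iff₀ (by positivity)]
  exact h1

/-- if `(h_n)` is a uniformly integrable sequence of nonnegative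
functions and `∫ f_n²/(1 + h_n) dμ ≤ M` for all `n`, then `(f_n)` is uniformly
integrable. -/
theorem uniformly_integrable_of_weighted_L2_bound
    {X : Type*} [MeasurableSpace X] (μ : Measure X) [IsFiniteMeasure μ]
    (M : ℝ) (f h : ℕ → X → ℝ)
    (hf_meas : ∀ n, Measurable (f n)) (hh_meas : ∀ n, Measurable (h n))
    (hh_nonneg : ∀ n x, 0 ≤ h n x)
    (hh_int : ∀ n, Integrable (h n) μ)
    (hh_sup : ∃ C : ℝ, ∀ n, ∫ x, h n x ∂μ ≤ C)
    (hh_ui : ∀ ε : ℝ, 0 < ε → ∃ δ : ℝ, 0 < δ ∧ ∀ n, ∀ E : Set X,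
        MeasurableSet E → μ E < ENNReal.ofReal δ → ∫ x in E, h n x ∂μ < ε)
    (hfh_int : ∀ n, Integrable (fun x => (f n x) ^ 2 / (1 + h n x)) μ)
    (hfh_bdd : ∀ n, ∫ x, (f n x) ^ 2 / (1 + h n x) ∂μ ≤ M) :
    (∀ n, Integrable (f n) μ) ∧
      (∃ C : ℝ, ∀ n, ∫ x, |f n x| ∂μ ≤ C) ∧
      ∀ ε : ℝ, 0 < ε → ∃ δ : ℝ, 0 < δ ∧ ∀ n, ∀ E : Set X,
        MeasurableSet E → μ E < ENNReal.ofReal δ → ∫ x in E, |f n x| ∂μ ≤ ε := by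
  have hb : ∀ n x, (0:ℝ) < 1 + h n x := fun n x => by linarith [hh_nonneg n x]
  have ha_nonneg : ∀ n x, 0 ≤ (f n x) ^ 2 / (1 + h n x) :=
    fun n x => div_nonneg (sq_nonneg _) (hb n x).le
  have hM : 0 ≤ M := le_trans (integral_nonneg (ha_nonneg 0)) (hfh_bdd 0)
  obtain ⟨C, hC⟩ := hh_sup
  have hbound_int : ∀ n (t : ℝ),
      Integrable (fun x => (t * ((f n x) ^ 2 / (1 + h n x)) + (1 + h n x) / t) / 2) μ :=
    fun n t => (((hfh_int n).const_mul t).add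
      (((integrable_const 1).add (hh_int n)).div_const t)).div_const 2
  have hf_le : ∀ n (t : ℝ), 0 < t → ∀ x,
      |f n x| ≤ (t * ((f n x) ^ 2 / (1 + h n x)) + (1 + h n x) / t) / 2 :=
    fun n t ht x => amgm_aux t (f n x) _ ht (hb n x)
  have hf_int : ∀ n, Integrable (f n) μ := fun n =>
    Integrable.mono' (hbound_int n 1) (hf_meas n).aestronglyMeasurable
      (Filter.Eventually.of_forall fun x => by
        simpa [Real.norm_eq_abs] using hf_le n 1 one_pos x)
  have ha_set : ∀ n (E : Set X), ∫ x in E, (f n x) ^ 2 / (1 + h n x) ∂μ ≤ M :=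
    fun n E => le_trans (setIntegral_le_integral (hfh_int n)
      (Filter.Eventually.of_forall (ha_nonneg n))) (hfh_bdd n)
  have key : ∀ n (t : ℝ), 0 < t → ∀ E : Set X, MeasurableSet E →
      ∫ x in E, |f n x| ∂μ ≤
        (t * (∫ x in E, (f n x) ^ 2 / (1 + h n x) ∂μ)
          + ((μ E).toReal + ∫ x in E, h n x ∂μ) / t) / 2 := by
    intro n t ht E hE
    have h1 : ∫ x in E, |f n x| ∂μ ≤
        ∫ x in E, (t * ((f n x) ^ 2 / (1 + h n x)) + (1 + h n x) / t) / 2 ∂μ :=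
      integral_mono_of_nonneg (Filter.Eventually.of_forall fun x => abs_nonneg _)
        ((hbound_int n t).restrict) (Filter.Eventually.of_forall (hf_le n t ht))
    refine h1.trans (le_of_eq ?_)
    have i1 : Integrable (fun x => t * ((f n x) ^ 2 / (1 + h n x))) (μ.restrict E) :=
      ((hfh_int n).const_mul t).restrict
    have i3 : Integrable (fun x => (1:ℝ) + h n x) (μ.restrict E) := by
      exact ((integrable_const 1).add (hh_int n)).restrict
    have i2 : Integrable (fun x => (1 + h n x) / t) (μ.restrict E) := i3.div_const t
    rw [integral_div, integral_add i1 i2, integral_const_mul, integral_div,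
      integral_add ((integrable_const 1).restrict) (hh_int n).restrict]
    simp; rfl
  refine ⟨hf_int, ⟨(M + (μ Set.univ).toReal + C) / 2, fun n => ?_⟩, ?_⟩
  · have := key n 1 one_pos Set.univ MeasurableSet.univ
    simp only [Measure.restrict_univ, one_mul, div_one] at this
    have h2 := ha_set n Set.univ
    simp only [Measure.restrict_univ] at h2
    have h3 := hC n
    linarith
  · intro ε hε
    set t : ℝ := ε / (M + 1) with ht_def
    have ht : 0 < t := by positivity
    obtain ⟨δh, hδh, hδh'⟩ := hh_ui (t * ε / 2) (by positivity)
    refine ⟨min δh (t * ε / 2), by positivity, fun n E hE hμE => ?_⟩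
    have hE1 : μ E < ENNReal.ofReal δh :=
      lt_of_lt_of_le hμE (ENNReal.ofReal_le_ofReal (min_le_left _ _))
    have hE2 : (μ E).toReal < t * ε / 2 := by
      have := lt_of_lt_of_le hμE (ENNReal.ofReal_le_ofReal (min_le_right _ _))
      exact (ENNReal.lt_ofReal_iff_toReal_lt (measure_ne_top μ E)).mp this
    have h_h := hδh' n E hE hE1
    have h_a := ha_set n E
    have hk := key n t ht E hE
    have htM : t * M ≤ ε := by
      rw [ht_def, div_mul_eq_mul_div, div_le_iff₀ (by positivity)]
      nlinarith
    have hdiv : ((μ E).toReal + ∫ x in E, h n x ∂μ) / t ≤ ε := by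
      rw [div_le_iff₀ ht]
      nlinarith
    have hmono : t * (∫ x in E, (f n x) ^ 2 / (1 + h n x) ∂μ) ≤ t * M :=
      mul_le_mul_of_nonneg_left h_a ht.le
    linarith
end
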